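/- For an n-dimensional Riemannian manifold and a point z where a Lipschitz function f is differentiable, the norm of the differential satisfies |D_z f| = (1/c_n) lim_{η→0} ⨍_{S^{n-1}} |f(exp_z(ηu)) − f(z)|/η du, where c_n = 2 / ((n−1) ∫₀^π sin^{n−2}(s) ds) and the average is over the unit sphere in T_zM. -/

import Mathlib

open MeasureTheory Filter Real
open Set Metric Topology intervalIntegral

lemma radial_gamma (n : ℕ) :
    ∫ r in Set.Ioi (0:ℝ), r ^ n * Real.exp (-(r^2)) = Real.Gamma ((n+1)/2) / 2 := by
  rw [Real.Gamma_eq_integral (by positivity : (0:ℝ) < ((n:ℝ)+1)/2)]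
  rw [← integral_comp_rpow_Ioi_of_pos (g := fun x : ℝ => Real.exp (-x) * x ^ (((n:ℝ)+1)/2 - 1)) (p := 2) two_pos]
  have key : ∫ x in Set.Ioi (0:ℝ), ((2:ℝ) * x ^ ((2:ℝ) - 1)) • (Real.exp (-(x^(2:ℝ))) * (x^(2:ℝ)) ^ (((n:ℝ)+1)/2 - 1))
      = ∫ x in Set.Ioi (0:ℝ), 2 * (x ^ n * Real.exp (-(x^2))) := by
    refine setIntegral_congr_fun measurableSet_Ioi (fun x hx => ?_)
    have hx : (0:ℝ) < x := hx
    have h1 : (x : ℝ) ^ (2:ℝ) = x ^ 2 := Real.rpow_two x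
    have h2 : ((x:ℝ)^2) ^ (((n:ℝ)+1)/2 - 1) = x ^ ((n:ℝ) - 1) := by
      rw [← Real.rpow_natCast x 2, ← Real.rpow_mul hx.le]
      ring_nf
    have h3 : x ^ ((n:ℝ) - 1) = x ^ n / x := by
      rw [Real.rpow_sub hx, Real.rpow_natCast, Real.rpow_one]
    have h4 : (2:ℝ) - 1 = 1 := by norm_num
    rw [smul_eq_mul, h1, h2, h3, h4, Real.rpow_one]
    field_simp
  rw [key, MeasureTheory.integral_const_mul]
  ring

lemma sin_pow_gamma : ∀ n : ℕ,
    (∫ s in (0:ℝ)..π, Real.sin s ^ n) = Real.sqrt π * Real.Gamma ((n+1)/2) / Real.Gamma ((n:ℝ)/2 + 1) := by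
  have key : ∀ n : ℕ,
      ((∫ s in (0:ℝ)..π, Real.sin s ^ n) = Real.sqrt π * Real.Gamma ((n+1)/2) / Real.Gamma ((n:ℝ)/2 + 1)) ∧
      ((∫ s in (0:ℝ)..π, Real.sin s ^ (n+1)) = Real.sqrt π * Real.Gamma (((n:ℝ)+1+1)/2) / Real.Gamma (((n:ℝ)+1)/2 + 1)) := by
    intro n
    induction n with
    | zero =>
      constructor
      · simp only [Nat.cast_zero, pow_zero, intervalIntegral.integral_const, smul_eq_mul, mul_one, sub_zero]
        rw [(by norm_num : ((0:ℝ)+1)/2 = 1/2), (by norm_num : (0:ℝ)/2 + 1 = 1),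
          Real.Gamma_one_half_eq, Real.Gamma_one]
        rw [div_one, Real.mul_self_sqrt Real.pi_pos.le]
      · simp only [Nat.cast_zero, zero_add, pow_one]
        rw [integral_sin]
        rw [(by norm_num : ((1:ℝ)+1)/2 = 1), Real.Gamma_one,
          Real.Gamma_add_one (by norm_num : (1/2:ℝ) ≠ 0), Real.Gamma_one_half_eq]
        have h := (Real.sqrt_pos.mpr Real.pi_pos).ne'
        rw [Real.cos_zero, Real.cos_pi]
        field_simp
        ring
    | succ k ih =>
      constructor
      · rw [show (((k+1:ℕ):ℝ)+1)/2 = ((k:ℝ)+1+1)/2 by push_cast; ring,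
          show ((k+1:ℕ):ℝ)/2 + 1 = ((k:ℝ)+1)/2 + 1 by push_cast; ring]
        exact ih.2
      · have hrec := integral_sin_pow (a := (0:ℝ)) (b := π) k
        simp only [Real.sin_zero, Real.sin_pi, zero_pow (Nat.succ_ne_zero k), zero_mul, sub_zero,
          zero_div, zero_add, ne_eq] at hrec
        rw [show k + 1 + 1 = k + 2 from rfl, hrec, ih.1]
        have h1 : Real.Gamma ((k:ℝ)/2 + 1) ≠ 0 := (Real.Gamma_pos_of_pos (by positivity)).ne'
        have h2 : ((k:ℝ) + 2) ≠ 0 := by positivity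
        have h3 : ((k:ℝ)/2 + 1) ≠ 0 := by positivity
        rw [show (((k+1:ℕ):ℝ)+1+1)/2 = ((k:ℝ)+1)/2 + 1 by push_cast; ring,
          show (((k+1:ℕ):ℝ)+1)/2 + 1 = ((k:ℝ)/2 + 1) + 1 by push_cast; ring,
          Real.Gamma_add_one (by positivity : (0:ℝ) < ((k:ℝ)+1)/2).ne',
          Real.Gamma_add_one h3]
        field_simp
  exact fun n => (key n).1

lemma abs_gauss : ∫ t : ℝ, |t| * Real.exp (-(t^2)) = 1 := by
  calc ∫ t : ℝ, |t| * Real.exp (-(t^2)) = ∫ t : ℝ, |t| * Real.exp (-(|t|^2)) := by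
        simp_rw [sq_abs]
    _ = 2 * ∫ t in Set.Ioi (0:ℝ), t * Real.exp (-(t^2)) :=
        integral_comp_abs (f := fun s : ℝ => s * Real.exp (-(s^2)))
    _ = 1 := by
        rw [show (∫ t in Set.Ioi (0:ℝ), t * Real.exp (-(t^2)))
            = ∫ t in Set.Ioi (0:ℝ), t^(1:ℕ) * Real.exp (-(t^2)) by simp, radial_gamma 1]
        norm_num [Real.Gamma_one]

lemma plain_gauss : ∫ t : ℝ, Real.exp (-(t^2)) = Real.sqrt π := by
  have := integral_gaussian 1
  simpa using this

lemma gauss_moment {n : ℕ} (i : Fin n) :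
    ∫ x : EuclideanSpace ℝ (Fin n), |x i| * Real.exp (-(‖x‖^2)) = Real.sqrt π ^ (n-1) := by
  rw [← (MeasurePreserving.symm _ (EuclideanSpace.volume_preserving_symm_measurableEquiv_toLp (Fin n))).integral_comp'
    (fun x : EuclideanSpace ℝ (Fin n) => |x i| * Real.exp (-(‖x‖^2)))]
  have hnorm : ∀ x : Fin n → ℝ,
      ‖(MeasurableEquiv.toLp 2 (Fin n → ℝ)).symm.symm x‖^2 = ∑ j, (x j)^2 := by
    intro x
    rw [EuclideanSpace.norm_eq, Real.sq_sqrt (by positivity)]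
    refine Finset.sum_congr rfl fun j _ => ?_
    rw [Real.norm_eq_abs, sq_abs]
    rfl
  have happ : ∀ x : Fin n → ℝ, ((MeasurableEquiv.toLp 2 (Fin n → ℝ)).symm.symm x) i = x i :=
    fun _ => rfl
  calc ∫ x : Fin n → ℝ, |((MeasurableEquiv.toLp 2 (Fin n → ℝ)).symm.symm x) i|
          * Real.exp (-(‖(MeasurableEquiv.toLp 2 (Fin n → ℝ)).symm.symm x‖^2))
      = ∫ x : Fin n → ℝ, ∏ j, (if j = i then |x j| else 1) * Real.exp (-((x j)^2)) := by
        congr 1; ext x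
        rw [happ, hnorm, Finset.prod_mul_distrib, ← Real.exp_sum]
        simp [Finset.prod_ite_eq', Finset.sum_neg_distrib]
    _ = ∏ j, ∫ t : ℝ, (if j = i then |t| else 1) * Real.exp (-(t^2)) :=
        MeasureTheory.integral_fintype_prod_eq_prod (ι := Fin n)
          (fun j t => (if j = i then |t| else 1) * Real.exp (-(t^2)))
    _ = ∏ j, if j = i then (1:ℝ) else Real.sqrt π := by
        refine Finset.prod_congr rfl fun j _ => ?_
        by_cases h : j = i <;> simp [h, abs_gauss, plain_gauss]
    _ = Real.sqrt π ^ (n-1) := by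
        rw [← Finset.prod_erase_mul _ _ (Finset.mem_univ i)]
        rw [Finset.prod_congr rfl (fun j hj => if_neg (Finset.ne_of_mem_erase hj)),
          Finset.prod_const, Finset.card_erase_of_mem (Finset.mem_univ i)]
        simp [Finset.card_univ]

lemma polar_inner {n : ℕ} (hn : 1 ≤ n) (v : EuclideanSpace ℝ (Fin n)) :
    ∫ x : EuclideanSpace ℝ (Fin n), |inner ℝ v x| * Real.exp (-(‖x‖^2))
      = (∫ u : sphere (0:EuclideanSpace ℝ (Fin n)) 1,
            |inner ℝ v (u:EuclideanSpace ℝ (Fin n))| ∂((volume : Measure (EuclideanSpace ℝ (Fin n))).toSphere))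
        * ∫ r in Set.Ioi (0:ℝ), r ^ n * Real.exp (-(r^2)) := by
  haveI : Nontrivial (EuclideanSpace ℝ (Fin n)) := by
    refine Module.nontrivial_of_finrank_pos (R := ℝ) ?_
    rw [finrank_euclideanSpace_fin]; omega
  set f : EuclideanSpace ℝ (Fin n) → ℝ := fun x => |inner ℝ v x| * Real.exp (-(‖x‖^2)) with hf
  set g : sphere (0:EuclideanSpace ℝ (Fin n)) 1 × Set.Ioi (0:ℝ) → ℝ :=
    fun p => |(inner ℝ v (p.1:EuclideanSpace ℝ (Fin n)) : ℝ)| * ((p.2:ℝ) * Real.exp (-((p.2:ℝ)^2))) with hg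
  have h0 : ∫ x : EuclideanSpace ℝ (Fin n), f x = ∫ x : ({0}ᶜ : Set (EuclideanSpace ℝ (Fin n))), f x.1 ∂(volume.comap Subtype.val) := by
    rw [integral_subtype_comap (measurableSet_singleton (0:EuclideanSpace ℝ (Fin n))).compl, restrict_compl_singleton]
  have h1 := (volume : Measure (EuclideanSpace ℝ (Fin n))).measurePreserving_homeomorphUnitSphereProd.integral_comp
    (Homeomorph.measurableEmbedding _) g
  have h2 : ∀ x : ({0}ᶜ : Set (EuclideanSpace ℝ (Fin n))), g (homeomorphUnitSphereProd (EuclideanSpace ℝ (Fin n)) x) = f x.1 := by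
    rintro ⟨x, hx⟩
    have hx' : x ≠ 0 := hx
    have hxn : (0:ℝ) < ‖x‖ := norm_pos_iff.mpr hx'
    simp only [hg, hf, homeomorphUnitSphereProd_apply_fst_coe, homeomorphUnitSphereProd_apply_snd_coe]
    rw [real_inner_smul_right, abs_mul, abs_inv, abs_norm]
    field_simp
  have h3 : ∫ x : ({0}ᶜ : Set (EuclideanSpace ℝ (Fin n))), f x.1 ∂(volume.comap Subtype.val)
      = ∫ p, g p ∂(((volume : Measure (EuclideanSpace ℝ (Fin n))).toSphere).prod
          (Measure.volumeIoiPow (Module.finrank ℝ (EuclideanSpace ℝ (Fin n)) - 1))) := by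
    rw [← h1]
    exact integral_congr_ae (Filter.Eventually.of_forall fun x => (h2 x).symm)
  have h4 : ∫ p, g p ∂(((volume : Measure (EuclideanSpace ℝ (Fin n))).toSphere).prod
        (Measure.volumeIoiPow (Module.finrank ℝ (EuclideanSpace ℝ (Fin n)) - 1)))
      = (∫ u : sphere (0:EuclideanSpace ℝ (Fin n)) 1, |(inner ℝ v (u:EuclideanSpace ℝ (Fin n)) : ℝ)| ∂((volume : Measure (EuclideanSpace ℝ (Fin n))).toSphere))
        * ∫ r : Set.Ioi (0:ℝ), ((r:ℝ) * Real.exp (-((r:ℝ)^2)))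
            ∂(Measure.volumeIoiPow (Module.finrank ℝ (EuclideanSpace ℝ (Fin n)) - 1)) :=
by
    simp only [hg]
    exact integral_prod_mul (fun u : sphere (0:EuclideanSpace ℝ (Fin n)) 1 => |(inner ℝ v (u:EuclideanSpace ℝ (Fin n)) : ℝ)|)
      (fun r : Set.Ioi (0:ℝ) => (r:ℝ) * Real.exp (-((r:ℝ)^2)))
  have h5 : ∫ r : Set.Ioi (0:ℝ), ((r:ℝ) * Real.exp (-((r:ℝ)^2)))
        ∂(Measure.volumeIoiPow (Module.finrank ℝ (EuclideanSpace ℝ (Fin n)) - 1))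
      = ∫ r in Set.Ioi (0:ℝ), r ^ n * Real.exp (-(r^2)) := by
    rw [Measure.volumeIoiPow]
    simp only [ENNReal.ofReal]
    rw [integral_withDensity_eq_integral_smul
      ((measurable_subtype_coe.pow_const _).real_toNNReal)]
    rw [integral_subtype_comap measurableSet_Ioi (fun t : ℝ =>
      (t ^ (Module.finrank ℝ (EuclideanSpace ℝ (Fin n)) - 1)).toNNReal • (t * Real.exp (-(t^2))))]
    refine setIntegral_congr_fun measurableSet_Ioi (fun r hr => ?_)
    have hr : (0:ℝ) < r := hr
    rw [NNReal.smul_def, Real.coe_toNNReal _ (by positivity), smul_eq_mul]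
    rw [show Module.finrank ℝ (EuclideanSpace ℝ (Fin n)) = n from finrank_euclideanSpace_fin]
    rw [← mul_assoc, ← pow_succ, Nat.sub_add_cancel hn]
  rw [h0, h3, h4, h5]

lemma gauss_inner_moment {n : ℕ} (hn : 1 ≤ n) (v : EuclideanSpace ℝ (Fin n)) :
    ∫ x : EuclideanSpace ℝ (Fin n), |inner ℝ v x| * Real.exp (-(‖x‖^2))
      = ‖v‖ * Real.sqrt π ^ (n-1) := by
  by_cases hv : v = 0
  · simp [hv]
  · set i0 : Fin n := ⟨0, hn⟩
    set w : EuclideanSpace ℝ (Fin n) := ‖v‖⁻¹ • v with hw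
    have hnv : ‖v‖ ≠ 0 := norm_ne_zero_iff.mpr hv
    have hwn : ‖w‖ = 1 := by
      rw [hw, norm_smul, norm_inv, norm_norm, inv_mul_cancel₀ hnv]
    set e₀ : EuclideanSpace ℝ (Fin n) := EuclideanSpace.single i0 1 with he₀
    have he₀n : ‖e₀‖ = 1 := by
      rw [he₀, EuclideanSpace.norm_single, norm_one]
    set e : EuclideanSpace ℝ (Fin n) ≃ₗᵢ[ℝ] EuclideanSpace ℝ (Fin n) :=
      Submodule.reflection (ℝ ∙ (e₀ - w))ᗮ with he
    have hee : e e₀ = w := Submodule.reflection_sub (by rw [he₀n, hwn])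
    have hmp := e.measurePreserving.integral_comp e.toHomeomorph.measurableEmbedding
      (fun x : EuclideanSpace ℝ (Fin n) => |inner ℝ v x| * Real.exp (-(‖x‖^2)))
    rw [← hmp]
    have : ∀ x : EuclideanSpace ℝ (Fin n),
        |(inner ℝ v (e x) : ℝ)| * Real.exp (-(‖e x‖^2)) = ‖v‖ * (|x i0| * Real.exp (-(‖x‖^2))) := by
      intro x
      have h1 : (inner ℝ v (e x) : ℝ) = ‖v‖ * (inner ℝ e₀ x : ℝ) := by
        have hv' : v = ‖v‖ • w := by rw [hw, smul_smul, mul_inv_cancel₀ hnv, one_smul]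
        calc (inner ℝ v (e x) : ℝ) = ‖v‖ * (inner ℝ w (e x) : ℝ) := by
              conv_lhs => rw [hv']
              rw [real_inner_smul_left]
          _ = ‖v‖ * (inner ℝ (e e₀) (e x) : ℝ) := by rw [hee]
          _ = ‖v‖ * (inner ℝ e₀ x : ℝ) := by rw [e.inner_map_map]
      have h2 : (inner ℝ e₀ x : ℝ) = x i0 := by
        rw [he₀, EuclideanSpace.inner_single_left]
        simp
      rw [h1, h2, e.norm_map, abs_mul, abs_norm]
      ring
    rw [integral_congr_ae (Filter.Eventually.of_forall this), MeasureTheory.integral_const_mul,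
      gauss_moment i0]

lemma sphere_inner_integral {n : ℕ} (hn : 1 ≤ n) (v : EuclideanSpace ℝ (Fin n)) :
    (∫ u : sphere (0:EuclideanSpace ℝ (Fin n)) 1,
        |inner ℝ v (u:EuclideanSpace ℝ (Fin n))| ∂((volume : Measure (EuclideanSpace ℝ (Fin n))).toSphere))
      = 2 * ‖v‖ * Real.sqrt π ^ (n-1) / Real.Gamma ((n+1)/2) := by
  have h := polar_inner hn v
  rw [radial_gamma n, gauss_inner_moment hn v] at h
  have hΓ : Real.Gamma (((n:ℝ)+1)/2) ≠ 0 := (Real.Gamma_pos_of_pos (by positivity)).ne'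
  field_simp at h ⊢
  linarith [h]

lemma average_inner {n : ℕ} (hn : 2 ≤ n) (v : EuclideanSpace ℝ (Fin n)) :
    ((((volume : Measure (EuclideanSpace ℝ (Fin n))).toSphere) Set.univ).toReal)⁻¹
      * (∫ u : sphere (0:EuclideanSpace ℝ (Fin n)) 1,
          |inner ℝ v (u:EuclideanSpace ℝ (Fin n))| ∂((volume : Measure (EuclideanSpace ℝ (Fin n))).toSphere))
      = (2 / ((n - 1 : ℝ) * ∫ s in (0:ℝ)..π, Real.sin s ^ (n - 2))) * ‖v‖ := by
  haveI : Nonempty (Fin n) := ⟨⟨0, by omega⟩⟩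
  rw [sphere_inner_integral (by omega) v]
  have hvol : (((volume : Measure (EuclideanSpace ℝ (Fin n))).toSphere) Set.univ).toReal
      = n * (Real.sqrt π ^ n / Real.Gamma ((n:ℝ)/2+1)) := by
    rw [Measure.toSphere_apply_univ, EuclideanSpace.volume_ball]
    rw [finrank_euclideanSpace_fin, Fintype.card_fin]
    rw [ENNReal.ofReal_one, one_pow, one_mul, ENNReal.toReal_mul,
      ENNReal.toReal_ofReal (by positivity)]
    simp
  rw [hvol, sin_pow_gamma (n-2)]
  have hc1 : ((n - 2 : ℕ) : ℝ) = (n:ℝ) - 2 := by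
    push_cast [Nat.cast_sub hn]; ring
  rw [hc1]
  have hg1 : Real.Gamma ((((n:ℝ) - 2) + 1)/2) = Real.Gamma (((n:ℝ)-1)/2) := by congr 1; ring
  have hg2 : Real.Gamma (((n:ℝ) - 2)/2 + 1) = Real.Gamma ((n:ℝ)/2) := by congr 1; ring
  rw [hg1, hg2]
  have hcast : (2:ℝ) ≤ (n:ℝ) := by exact_mod_cast hn
  have hne1 : (((n:ℝ)-1)/2) ≠ 0 := ne_of_gt (by linarith)
  have hne2 : ((n:ℝ)/2) ≠ 0 := by positivity
  have ha : Real.Gamma (((n:ℝ)-1)/2) ≠ 0 := by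
    refine (Real.Gamma_pos_of_pos ?_).ne'
    linarith
  have hb : Real.Gamma ((n:ℝ)/2) ≠ 0 := (Real.Gamma_pos_of_pos (by positivity)).ne'
  have h1 : Real.Gamma (((n:ℝ)+1)/2) = (((n:ℝ)-1)/2) * Real.Gamma (((n:ℝ)-1)/2) := by
    rw [show ((n:ℝ)+1)/2 = ((n:ℝ)-1)/2 + 1 by ring, Real.Gamma_add_one hne1]
  have h2 : Real.Gamma ((n:ℝ)/2 + 1) = ((n:ℝ)/2) * Real.Gamma ((n:ℝ)/2) :=
    Real.Gamma_add_one hne2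
  rw [h1, h2]
  have hpow : Real.sqrt π ^ n = Real.sqrt π ^ (n-1) * Real.sqrt π := by
    rw [← pow_succ, Nat.sub_add_cancel (by omega)]
  rw [hpow]
  have hs : Real.sqrt π ≠ 0 := (Real.sqrt_pos.mpr Real.pi_pos).ne'
  have hsp : Real.sqrt π ^ (n-1) ≠ 0 := pow_ne_zero _ hs
  have hn0 : (n:ℝ) ≠ 0 := by positivity
  have hn1 : (n:ℝ) - 1 ≠ 0 := by
    linarith
  field_simp

lemma tendsto_slope_integral {n : ℕ} (hn : 2 ≤ n)
    (f : EuclideanSpace ℝ (Fin n) → ℝ) {K : NNReal} (hf : LipschitzWith K f)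
    (z : EuclideanSpace ℝ (Fin n)) (hdiff : DifferentiableAt ℝ f z) :
    Tendsto (fun η : ℝ => ∫ u : sphere (0:EuclideanSpace ℝ (Fin n)) 1,
        |f (z + η • (u : EuclideanSpace ℝ (Fin n))) - f z| / η
          ∂((volume : Measure (EuclideanSpace ℝ (Fin n))).toSphere))
      (nhdsWithin (0:ℝ) (Set.Ioi 0))
      (𝓝 (∫ u : sphere (0:EuclideanSpace ℝ (Fin n)) 1,
        |fderiv ℝ f z (u : EuclideanSpace ℝ (Fin n))|
          ∂((volume : Measure (EuclideanSpace ℝ (Fin n))).toSphere))) := by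
  set σ := (volume : Measure (EuclideanSpace ℝ (Fin n))).toSphere with hσ
  refine tendsto_integral_filter_of_dominated_convergence (bound := fun _ => (K:ℝ)) ?_ ?_ ?_ ?_
  · filter_upwards with η
    have hfc : Continuous f := hf.continuous
    have hc : Continuous fun u : sphere (0:EuclideanSpace ℝ (Fin n)) 1 => |f (z + η • (u:EuclideanSpace ℝ (Fin n))) - f z| / η := by
      fun_prop
    exact hc.aestronglyMeasurable
  · filter_upwards [self_mem_nhdsWithin] with η (hη : (0:ℝ) < η)
    refine Filter.Eventually.of_forall fun u => ?_
    have hu : ‖(u:EuclideanSpace ℝ (Fin n))‖ = 1 := mem_sphere_zero_iff_norm.mp u.2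
    have hdist : |f (z + η • (u:EuclideanSpace ℝ (Fin n))) - f z| ≤ K * η := by
      have := hf.dist_le_mul (z + η • (u:EuclideanSpace ℝ (Fin n))) z
      rw [Real.dist_eq, dist_eq_norm] at this
      simpa [norm_smul, hu, abs_of_pos hη] using this
    rw [Real.norm_eq_abs, abs_div, abs_of_pos hη, abs_abs, div_le_iff₀ hη]
    calc |f (z + η • (u:EuclideanSpace ℝ (Fin n))) - f z| ≤ K * η := hdist
    _ = ↑K * η := rfl
  · exact integrable_const _
  · refine Filter.Eventually.of_forall fun u => ?_
    have hφ : HasDerivAt (fun η : ℝ => z + η • (u:EuclideanSpace ℝ (Fin n))) (u:EuclideanSpace ℝ (Fin n)) 0 := by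
      simpa using ((hasDerivAt_id (0:ℝ)).smul_const (u:EuclideanSpace ℝ (Fin n))).const_add z
    have hcomp : HasDerivAt (fun η : ℝ => f (z + η • (u:EuclideanSpace ℝ (Fin n)))) (fderiv ℝ f z (u:EuclideanSpace ℝ (Fin n))) 0 := by
      have hd' : HasFDerivAt f (fderiv ℝ f z) (z + (0:ℝ) • (u:EuclideanSpace ℝ (Fin n))) := by
        simpa using hdiff.hasFDerivAt
      have := hd'.comp_hasDerivAt 0 hφ
      exact this
    have hslope := hasDerivAt_iff_tendsto_slope.mp hcomp
    have hmono : nhdsWithin (0:ℝ) (Set.Ioi 0) ≤ nhdsWithin (0:ℝ) {(0:ℝ)}ᶜ :=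
      nhdsWithin_mono _ (fun x hx => ne_of_gt hx)
    have h1 : Tendsto (fun η : ℝ => (f (z + η • (u:EuclideanSpace ℝ (Fin n))) - f z) / η)
        (nhdsWithin (0:ℝ) (Set.Ioi 0)) (𝓝 (fderiv ℝ f z (u:EuclideanSpace ℝ (Fin n)))) := by
      have := hslope.mono_left hmono
      refine this.congr' ?_
      filter_upwards [self_mem_nhdsWithin] with η (hη : (0:ℝ) < η)
      rw [slope_def_field]
      simp
    have h2 := h1.abs
    refine h2.congr' ?_
    filter_upwards [self_mem_nhdsWithin] with η (hη : (0:ℝ) < η)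
    rw [abs_div, abs_of_pos hη]

/-- at a point `z` of differentiability of a Lipschitz function `f` on
an `n`-dimensional Riemannian manifold (model case: `ℝⁿ`, where `exp_z (η u) = z + η u`),
the norm of the differential satisfies
`|D_z f| = (1/c_n) lim_{η→0⁺} ⨍_{S^{n-1}} |f(exp_z(ηu)) - f z| / η du`,
with `c_n = 2 / ((n-1) ∫₀^π sin^{n-2}(s) ds)` and the average taken over the unit
sphere in `T_z M`. -/
theorem norm_differential_spherical_average
    {n : ℕ} (hn : 2 ≤ n)
    (f : EuclideanSpace ℝ (Fin n) → ℝ) (hf : ∃ K, LipschitzWith K f)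
    (z : EuclideanSpace ℝ (Fin n)) (hdiff : DifferentiableAt ℝ f z) :
    ‖fderiv ℝ f z‖ =
      (2 / ((n - 1 : ℝ) * ∫ s in (0:ℝ)..π, Real.sin s ^ (n - 2)))⁻¹ *
        (limUnder (nhdsWithin (0:ℝ) (Set.Ioi 0)) fun η =>
          ⨍ u, |f (z + η • (u : EuclideanSpace ℝ (Fin n))) - f z| / η
            ∂(volume : Measure (EuclideanSpace ℝ (Fin n))).toSphere) ∧
    Tendsto
      (fun η => ⨍ u, |f (z + η • (u : EuclideanSpace ℝ (Fin n))) - f z| / η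
          ∂(volume : Measure (EuclideanSpace ℝ (Fin n))).toSphere)
      (nhdsWithin (0:ℝ) (Set.Ioi 0))
      (nhds ((2 / ((n - 1 : ℝ) * ∫ s in (0:ℝ)..π, Real.sin s ^ (n - 2))) *
        ‖fderiv ℝ f z‖)) := by
  obtain ⟨K, hK⟩ := hf
  set c : ℝ := 2 / ((n - 1 : ℝ) * ∫ s in (0:ℝ)..π, Real.sin s ^ (n - 2)) with hc
  set σ := (volume : Measure (EuclideanSpace ℝ (Fin n))).toSphere with hσ
  set L := fderiv ℝ f z with hL
  set v := (InnerProductSpace.toDual ℝ (EuclideanSpace ℝ (Fin n))).symm L with hv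
  have hLu : ∀ x : EuclideanSpace ℝ (Fin n), L x = inner ℝ v x := fun x =>
    (InnerProductSpace.toDual_symm_apply).symm
  have hvL : ‖v‖ = ‖L‖ := LinearIsometryEquiv.norm_map _ L
  have hInt : (∫ u : sphere (0:EuclideanSpace ℝ (Fin n)) 1,
        |L (u : EuclideanSpace ℝ (Fin n))| ∂σ)
      = ∫ u : sphere (0:EuclideanSpace ℝ (Fin n)) 1, |inner ℝ v (u:EuclideanSpace ℝ (Fin n))| ∂σ :=
    integral_congr_ae (Filter.Eventually.of_forall fun u => by simp only []; rw [hLu])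
  have hT0 := tendsto_slope_integral hn f hK z hdiff
  rw [← hL, hInt] at hT0
  have havg : (fun η : ℝ => ⨍ u, |f (z + η • (u : EuclideanSpace ℝ (Fin n))) - f z| / η ∂σ)
      = fun η : ℝ => (σ Set.univ).toReal⁻¹ *
          ∫ u : sphere (0:EuclideanSpace ℝ (Fin n)) 1,
            |f (z + η • (u : EuclideanSpace ℝ (Fin n))) - f z| / η ∂σ := by
    funext η
    rw [average_eq, smul_eq_mul]
    rfl
  have hTend : Tendsto
      (fun η : ℝ => ⨍ u, |f (z + η • (u : EuclideanSpace ℝ (Fin n))) - f z| / η ∂σ)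
      (nhdsWithin (0:ℝ) (Set.Ioi 0)) (𝓝 (c * ‖L‖)) := by
    rw [havg]
    have := hT0.const_mul ((σ Set.univ).toReal⁻¹)
    rwa [average_inner hn v, hvL] at this
  have hcpos : 0 < c := by
    rw [hc]
    have hI := integral_sin_pow_pos (n := n - 2)
    have h1 : (0:ℝ) < (n:ℝ) - 1 := by
      have : (2:ℝ) ≤ (n:ℝ) := by exact_mod_cast hn
      linarith
    positivity
  refine ⟨?_, hTend⟩
  rw [hTend.limUnder_eq, ← mul_assoc, inv_mul_cancel₀ hcpos.ne', one_mul]
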